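/- Let m ≥ 4 be an integer, let π be a permutation of {0,1,…,m−3}, and let e_i, f_i ∈ Z_2 for 0 ≤ i ≤ m−3. Let a = Ψ_{2^{m−2}−1}(g^0) and b = Ψ_{2^{m−2}−1}(g^1), sequences of length N = 2^{m−1}+2. Then for every integer τ with 1 ≤ τ ≤ 2^{m−2}, the aperiodic autocorrelation sum vanishes: ρ_a(τ)+ρ_b(τ) = 0. -/

import Mathlib

open Finset

/-- The `j`-th binary digit of the integer `i`, as an element of `ZMod 2`. -/
def bitZ (i j : ℕ) : ZMod 2 := ((i / 2 ^ j) % 2 : ℕ)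

/-- The generalized Boolean function `ζ^d` of the construction (in variables `x_0,…,x_{m-3}`). -/
def zeta (m : ℕ) (π : ℕ → ℕ) (d : ZMod 2) (x : ℕ → ZMod 2) : ZMod 2 :=
  (∑ α ∈ Finset.range (m - 3), x (π α) * x (π (α + 1))) + d * x (π (m - 3))

/-- The generalized Boolean function `η^d` of the construction. -/
def eta (m : ℕ) (π : ℕ → ℕ) (d : ZMod 2) (x : ℕ → ZMod 2) : ZMod 2 :=
  (∑ α ∈ Finset.range (m - 3), (1 - x (π α)) * (1 - x (π (α + 1))))
    + (1 - d) * x (π (m - 3))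

/-- The generalized Boolean function `g^d` of the construction (in `m` variables). -/
def gbf (m : ℕ) (π : ℕ → ℕ) (e f : ℕ → ZMod 2) (d : ZMod 2) (x : ℕ → ZMod 2) : ZMod 2 :=
  x (m - 2) * (1 - x (m - 1)) * zeta m π d x
    + (1 - x (m - 2)) * x (m - 1) * eta m π d x
    + d * (1 - x (m - 2)) * (1 - x (m - 1))
    + x (m - 2) * x (m - 1)
    + (∑ i ∈ Finset.range (m - 2), e i * x i)
    + (∑ i ∈ Finset.range (m - 2), f i * (1 - x i))

/-- The ±1 sequence `Ψ(F)` associated with a generalized Boolean function: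
its `i`-th entry is `(-1)^{F(r_{i,0}, r_{i,1}, …)}`. -/
def Psi (F : (ℕ → ZMod 2) → ZMod 2) (i : ℕ) : ℤ := (-1) ^ (F (bitZ i)).val

/-- The truncated sequence `Ψ_L(F)`, obtained by deleting the first (and last) `L`
entries of `Ψ(F)`: its `k`-th entry is the `(L+k)`-th entry of `Ψ(F)`. -/
def PsiT (F : (ℕ → ZMod 2) → ZMod 2) (L : ℕ) (k : ℕ) : ℤ := Psi F (L + k)

/-- Aperiodic autocorrelation of a length-`N` sequence `a` at time shift `τ`. -/
def rho (N : ℕ) (a : ℕ → ℤ) (τ : ℕ) : ℤ :=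
  ∑ k ∈ Finset.range (N - τ), a k * a (k + τ)

def nb (z j : ℕ) : ℕ := z / 2 ^ j % 2

lemma nb_le_one (z j : ℕ) : nb z j ≤ 1 := by unfold nb; omega

lemma bitZ_eq (z j : ℕ) : bitZ z j = (nb z j : ZMod 2) := rfl

def flipb (z b : ℕ) : ℕ := if nb z b = 1 then z - 2 ^ b else z + 2 ^ b

lemma decomp (z b : ℕ) :
    z = z / 2 ^ (b+1) * 2 ^ (b+1) + nb z b * 2 ^ b + z % 2 ^ b := by
  have f1 : z % (2 ^ b * 2) = z % 2 ^ b + 2 ^ b * (z / 2 ^ b % 2) := Nat.mod_mul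
  have f2 : 2 ^ b * 2 * (z / (2 ^ b * 2)) + z % (2 ^ b * 2) = z := Nat.div_add_mod z _
  have f3 : (2:ℕ) ^ (b+1) = 2 ^ b * 2 := by ring
  unfold nb
  rw [f3, mul_comm (z / (2 ^ b * 2)) (2 ^ b * 2), mul_comm (z / 2 ^ b % 2) (2 ^ b)]
  omega

lemma nb_mul_add_low {j b : ℕ} (hj : j < b) (M r : ℕ) :
    nb (M * 2 ^ b + r) j = nb r j := by
  have hb : (2:ℕ) ^ b = 2 ^ (b - j) * 2 ^ j := by
    rw [← pow_add]; congr 1; omega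
  have h1 : (M * 2 ^ b + r) / 2 ^ j = M * 2 ^ (b - j) + r / 2 ^ j := by
    rw [hb, ← mul_assoc, mul_comm (M * 2 ^ (b-j)) (2^j), Nat.mul_add_div (by positivity)]
  have h3 : M * 2 ^ (b - j) = 2 * (M * 2 ^ (b - j - 1)) := by
    have h2 : (2:ℕ) ^ (b - j) = 2 * 2 ^ (b - j - 1) := by
      rw [← pow_succ']; congr 1; omega
    rw [h2]; ring
  unfold nb
  rw [h1, h3]
  omega

lemma nb_mul_add_high {s t j : ℕ} (ht : t ≤ j) (q : ℕ) (hs : s < 2 ^ t) :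
    nb (q * 2 ^ t + s) j = nb q (j - t) := by
  have h0 : (2:ℕ) ^ j = 2 ^ t * 2 ^ (j - t) := by rw [← pow_add]; congr 1; omega
  have h1 : (q * 2 ^ t + s) / 2 ^ t = q := by
    rw [mul_comm, Nat.mul_add_div (by positivity), Nat.div_eq_of_lt hs, add_zero]
  unfold nb
  rw [h0, ← Nat.div_div_eq_div_mul, h1]

lemma nb_decomp_self {b c r : ℕ} (hc : c ≤ 1) (hr : r < 2 ^ b) (q : ℕ) :
    nb (q * 2 ^ (b+1) + c * 2 ^ b + r) b = c := by
  have h1 : q * 2 ^ (b+1) + c * 2 ^ b + r = (2 * q + c) * 2 ^ b + r := by ring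
  have h2 : nb ((2 * q + c) * 2 ^ b + r) b = nb (2 * q + c) 0 := by
    have := nb_mul_add_high (le_refl b) (2 * q + c) hr
    simpa using this
  rw [h1, h2]; unfold nb; simp; omega

lemma flipb_eq_decomp (z b : ℕ) :
    flipb z b = z / 2 ^ (b+1) * 2 ^ (b+1) + (1 - nb z b) * 2 ^ b + z % 2 ^ b := by
  have hd := decomp z b
  have hb := nb_le_one z b
  unfold flipb
  rcases Nat.lt_or_ge (nb z b) 1 with h | h
  · have h0 : nb z b = 0 := by omega
    rw [h0] at hd ⊢; rw [if_neg (by omega)]; omega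
  · have h0 : nb z b = 1 := by omega
    rw [h0] at hd ⊢; rw [if_pos rfl]; omega

lemma nb_flipb_self (z b : ℕ) : nb (flipb z b) b = 1 - nb z b := by
  rw [flipb_eq_decomp]
  exact nb_decomp_self (by omega) (Nat.mod_lt _ (by positivity)) _

lemma nb_flipb_ne {j b : ℕ} (h : j ≠ b) (z : ℕ) : nb (flipb z b) j = nb z j := by
  rcases Nat.lt_or_ge j b with hj | hj
  · calc nb (flipb z b) j
        = nb (z % 2 ^ b) j := by
          rw [flipb_eq_decomp]
          have : z / 2 ^ (b+1) * 2 ^ (b+1) + (1 - nb z b) * 2 ^ b + z % 2 ^ b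
              = (z / 2 ^ (b+1) * 2 + (1 - nb z b)) * 2 ^ b + z % 2 ^ b := by ring
          rw [this, nb_mul_add_low hj]
      _ = nb z j := by
          conv_rhs => rw [decomp z b]
          have : z / 2 ^ (b+1) * 2 ^ (b+1) + nb z b * 2 ^ b + z % 2 ^ b
              = (z / 2 ^ (b+1) * 2 + nb z b) * 2 ^ b + z % 2 ^ b := by ring
          rw [this, nb_mul_add_low hj]
  · have hj' : b + 1 ≤ j := by omega
    have hlt : ∀ c : ℕ, c ≤ 1 → c * 2 ^ b + z % 2 ^ b < 2 ^ (b+1) := by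
      intro c hc
      have h4 : z % 2 ^ b < 2 ^ b := Nat.mod_lt _ (by positivity)
      have h2 : (2:ℕ) ^ (b+1) = 2 ^ b + 2 ^ b := by ring
      have h5 : c * 2 ^ b ≤ 1 * 2 ^ b := Nat.mul_le_mul_right _ hc
      omega
    calc nb (flipb z b) j
        = nb (z / 2 ^ (b+1)) (j - (b+1)) := by
          rw [flipb_eq_decomp, add_assoc, nb_mul_add_high hj' _ (hlt _ (by omega))]
      _ = nb z j := by
          conv_rhs => rw [decomp z b]
          rw [add_assoc, nb_mul_add_high hj' _ (hlt _ (nb_le_one z b))]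

lemma two_pow_le_of_nb_one {z b : ℕ} (h : nb z b = 1) : 2 ^ b ≤ z := by
  have hd := decomp z b
  rw [h] at hd
  omega

lemma flipb_of_zero {z b : ℕ} (h : nb z b = 0) : flipb z b = z + 2 ^ b := by
  unfold flipb; rw [if_neg (by omega)]

lemma flipb_of_one {z b : ℕ} (h : nb z b = 1) : flipb z b = z - 2 ^ b := by
  unfold flipb; rw [if_pos h]

lemma flipb_lt {z b s : ℕ} (hz : z < 2 ^ s) (hb : b < s) : flipb z b < 2 ^ s := by
  have hle := nb_le_one z b
  rcases Nat.le_one_iff_eq_zero_or_eq_one.mp hle with h | h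
  · rw [flipb_of_zero h]
    have hd := decomp z b
    rw [h] at hd
    have hq : z / 2 ^ (b+1) < 2 ^ (s - (b+1)) := by
      apply Nat.div_lt_of_lt_mul
      have h3 : (2:ℕ) ^ (b+1) * 2 ^ (s - (b+1)) = 2 ^ s := by rw [← pow_add]; congr 1; omega
      omega
    have hq' : z / 2 ^ (b+1) + 1 ≤ 2 ^ (s - (b+1)) := hq
    have h2 : (z / 2 ^ (b+1) + 1) * 2 ^ (b+1) ≤ 2 ^ (s - (b+1)) * 2 ^ (b+1) :=
      Nat.mul_le_mul_right _ hq'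
    have h3 : (2:ℕ) ^ (s - (b+1)) * 2 ^ (b+1) = 2 ^ s := by rw [← pow_add]; congr 1; omega
    have h4 : z % 2 ^ b < 2 ^ b := Nat.mod_lt _ (by positivity)
    have h5 : (2:ℕ)^(b+1) = 2^b + 2^b := by ring
    have h6 : (z / 2 ^ (b+1) + 1) * 2 ^ (b+1) = z / 2 ^ (b+1) * 2 ^ (b+1) + 2 ^ (b+1) := by ring
    omega
  · rw [flipb_of_one h]
    exact lt_of_le_of_lt (Nat.sub_le _ _) hz

lemma flipb_flipb (z b : ℕ) : flipb (flipb z b) b = z := by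
  have hle := nb_le_one z b
  rcases Nat.le_one_iff_eq_zero_or_eq_one.mp hle with h | h
  · have h1 : nb (flipb z b) b = 1 := by rw [nb_flipb_self, h]
    rw [flipb_of_one h1, flipb_of_zero h]
    omega
  · have h1 : nb (flipb z b) b = 0 := by rw [nb_flipb_self, h]
    have h2 := two_pow_le_of_nb_one h
    rw [flipb_of_zero h1, flipb_of_one h]
    omega

lemma flipb_add {z t b : ℕ} (h : nb z b = nb (z + t) b) :
    flipb (z + t) b = flipb z b + t := by
  have hle := nb_le_one z b
  rcases Nat.le_one_iff_eq_zero_or_eq_one.mp hle with h0 | h0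
  · rw [flipb_of_zero h0, flipb_of_zero (h ▸ h0)]
    omega
  · have h2 := two_pow_le_of_nb_one h0
    rw [flipb_of_one h0, flipb_of_one (h ▸ h0)]
    omega

lemma exists_nb_ne {z w s : ℕ} (hne : z ≠ w) (hz : z < 2 ^ s) (hw : w < 2 ^ s) :
    ∃ j, j < s ∧ nb z j ≠ nb w j := by
  by_contra hco
  push_neg at hco
  apply hne
  apply Nat.eq_of_testBit_eq
  intro i
  rw [Nat.testBit_eq_decide_div_mod_eq, Nat.testBit_eq_decide_div_mod_eq]
  rcases Nat.lt_or_ge i s with hi | hi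
  · have := hco i hi; unfold nb at this; rw [this]
  · have h1 : z / 2 ^ i = 0 := Nat.div_eq_of_lt (lt_of_lt_of_le hz (Nat.pow_le_pow_right (by norm_num) hi))
    have h2 : w / 2 ^ i = 0 := Nat.div_eq_of_lt (lt_of_lt_of_le hw (Nat.pow_le_pow_right (by norm_num) hi))
    rw [h1, h2]

def chiZ (s : ZMod 2) : ℤ := (-1) ^ s.val

lemma chiZ_add (s t : ZMod 2) : chiZ (s + t) = chiZ s * chiZ t := by
  revert s t; decide

lemma chiZ_cancel {s t : ZMod 2} (h : s = t + 1) : chiZ s + chiZ t = 0 := by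
  subst h; revert t; decide

def Qf (m : ℕ) (π : ℕ → ℕ) (z : ℕ) : ZMod 2 :=
  ∑ α ∈ Finset.range (m - 3), bitZ z (π α) * bitZ z (π (α + 1))

def LinF (m : ℕ) (e f : ℕ → ZMod 2) (z : ℕ) : ZMod 2 :=
  (∑ i ∈ Finset.range (m - 2), e i * bitZ z i)
    + ∑ i ∈ Finset.range (m - 2), f i * (1 - bitZ z i)

lemma nb_of_lt {z j : ℕ} (h : z < 2 ^ j) : nb z j = 0 := by
  unfold nb; rw [Nat.div_eq_of_lt h]

lemma bitZ_flip_self (z b : ℕ) : bitZ (flipb z b) b = bitZ z b + 1 := by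
  rw [bitZ_eq, bitZ_eq, nb_flipb_self]
  have := nb_le_one z b
  interval_cases h : nb z b <;> decide

lemma bitZ_flip_ne {j b : ℕ} (h : j ≠ b) (z : ℕ) : bitZ (flipb z b) j = bitZ z j := by
  rw [bitZ_eq, bitZ_eq, nb_flipb_ne h]

lemma bitZ_ne_sum {z w j : ℕ} (h : nb z j ≠ nb w j) : bitZ z j + bitZ w j = 1 := by
  rw [bitZ_eq, bitZ_eq]
  have h1 := nb_le_one z j
  have h2 := nb_le_one w j
  interval_cases h3 : nb z j <;> interval_cases h4 : nb w j <;> simp_all <;> decide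

lemma bitZ_eq_of_nb {z w j : ℕ} (h : nb z j = nb w j) : bitZ z j = bitZ w j := by
  rw [bitZ_eq, bitZ_eq, h]

section Main

variable {m : ℕ} {π : ℕ → ℕ}

lemma Qf_flip (hm : 4 ≤ m) (hinj : Set.InjOn π (Set.Iio (m - 2)))
    {γ : ℕ} (h1 : 1 ≤ γ) (h2 : γ ≤ m - 3) (z : ℕ) :
    Qf m π (flipb z (π γ)) + Qf m π z =
      bitZ z (π (γ - 1)) + (if γ < m - 3 then bitZ z (π (γ + 1)) else 0) := by
  have hb3 : m - 3 < m - 2 := by omega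
  have hπne : ∀ {α β : ℕ}, α < m - 2 → β < m - 2 → α ≠ β → π α ≠ π β := by
    intro α β hα hβ hne hc
    exact hne (hinj hα hβ hc)
  set b := π γ with hbdef
  set z' := flipb z b with hz'def
  have hz'ne : ∀ j, j ≠ b → bitZ z' j = bitZ z j := fun j hj => bitZ_flip_ne hj z
  have hz'b : bitZ z' b = bitZ z b + 1 := bitZ_flip_self z b
  have hsum : Qf m π z' + Qf m π z
      = ∑ β ∈ Finset.range (m - 3),
          (bitZ z' (π β) * bitZ z' (π (β + 1)) + bitZ z (π β) * bitZ z (π (β + 1))) := by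
    unfold Qf; rw [Finset.sum_add_distrib]
  rw [hsum]
  have hzero : ∀ β ∈ Finset.range (m - 3), β ∉ ({γ - 1, γ} : Finset ℕ) ∩ Finset.range (m - 3) →
      bitZ z' (π β) * bitZ z' (π (β + 1)) + bitZ z (π β) * bitZ z (π (β + 1)) = 0 := by
    intro β hβ hβ'
    rw [Finset.mem_range] at hβ
    rw [Finset.mem_inter, Finset.mem_insert, Finset.mem_singleton] at hβ'
    push_neg at hβ'
    have hne1a : β ≠ γ - 1 := fun h => hβ' (Or.inl h) (Finset.mem_range.mpr hβ)
    have hne1b : β ≠ γ := fun h => hβ' (Or.inr h) (Finset.mem_range.mpr hβ)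
    rw [hz'ne (π β) (hπne (by omega) (by omega) hne1b),
        hz'ne (π (β + 1)) (hπne (by omega) (by omega) (by omega))]
    exact CharTwo.add_self_eq_zero _
  rw [← Finset.sum_subset (Finset.inter_subset_right) hzero]
  by_cases hγ : γ < m - 3
  · have hset : ({γ - 1, γ} : Finset ℕ) ∩ Finset.range (m - 3) = {γ - 1, γ} := by
      apply Finset.inter_eq_left.mpr
      intro x hx
      rw [Finset.mem_insert, Finset.mem_singleton] at hx
      rcases hx with h | h <;> (rw [Finset.mem_range]; omega)
    rw [hset, Finset.sum_pair (by omega : γ - 1 ≠ γ), if_pos hγ]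
    have e1 : γ - 1 + 1 = γ := by omega
    rw [e1]
    rw [hz'ne (π (γ - 1)) (hπne (by omega) (by omega) (by omega)), hz'b,
        hz'ne (π (γ + 1)) (hπne (by omega) (by omega) (by omega))]
    generalize bitZ z (π (γ - 1)) = A
    generalize bitZ z b = B
    generalize bitZ z (π (γ + 1)) = C
    revert A B C; decide
  · have hγ' : γ = m - 3 := by omega
    have hset : ({γ - 1, γ} : Finset ℕ) ∩ Finset.range (m - 3) = {γ - 1} := by
      ext x
      rw [Finset.mem_inter, Finset.mem_insert, Finset.mem_singleton, Finset.mem_singleton,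
          Finset.mem_range]
      constructor
      · rintro ⟨h | h, hr⟩
        · exact h
        · omega
      · intro h; exact ⟨Or.inl h, by omega⟩
    rw [hset, Finset.sum_singleton, if_neg hγ]
    have e1 : γ - 1 + 1 = γ := by omega
    rw [e1]
    rw [hz'ne (π (γ - 1)) (hπne (by omega) (by omega) (by omega)), hz'b]
    generalize bitZ z (π (γ - 1)) = A
    generalize bitZ z b = B
    revert A B; decide

end Main

section Main2

variable {m : ℕ} {π : ℕ → ℕ}

lemma LinF_flip (e f : ℕ → ZMod 2) {b : ℕ} (hb : b < m - 2) (z : ℕ) :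
    LinF m e f (flipb z b) + LinF m e f z = e b + f b := by
  set z' := flipb z b with hz'
  have key : ∀ i : ℕ, (e i * bitZ z' i + f i * (1 - bitZ z' i))
      + (e i * bitZ z i + f i * (1 - bitZ z i))
      = if i = b then e i + f i else 0 := by
    intro i
    by_cases h : i = b
    · subst h
      rw [if_pos rfl, bitZ_flip_self]
      generalize bitZ z i = B
      generalize e i = E
      generalize f i = F
      revert B E F; decide
    · rw [if_neg h, bitZ_flip_ne h]
      generalize bitZ z i = B
      generalize e i = E
      generalize f i = F
      revert B E F; decide
  have expand : LinF m e f z' + LinF m e f z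
      = ∑ i ∈ Finset.range (m - 2), ((e i * bitZ z' i + f i * (1 - bitZ z' i))
          + (e i * bitZ z i + f i * (1 - bitZ z i))) := by
    unfold LinF
    rw [Finset.sum_add_distrib, Finset.sum_add_distrib, Finset.sum_add_distrib]
    try ring
  rw [expand, Finset.sum_congr rfl (fun i _ => key i), Finset.sum_ite_eq' (Finset.range (m-2)) b (fun i => e i + f i),
      if_pos (Finset.mem_range.mpr hb)]

lemma Qbar_eq (hm : 4 ≤ m) (x : ℕ) :
    ∑ α ∈ Finset.range (m - 3), (1 - bitZ x (π α)) * (1 - bitZ x (π (α + 1)))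
      = Qf m π x + bitZ x (π 0) + bitZ x (π (m - 3)) + ((m - 3 : ℕ) : ZMod 2) := by
  have pt : ∀ a c : ZMod 2, (1 - a) * (1 - c) = a * c + (a + c) + 1 := by decide
  have step1 : ∑ α ∈ Finset.range (m - 3), (1 - bitZ x (π α)) * (1 - bitZ x (π (α + 1)))
      = ∑ α ∈ Finset.range (m - 3),
          (bitZ x (π α) * bitZ x (π (α + 1)) + (bitZ x (π α) + bitZ x (π (α + 1))) + 1) :=
    Finset.sum_congr rfl (fun α _ => pt _ _)
  rw [step1, Finset.sum_add_distrib, Finset.sum_add_distrib]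
  have h1 : ∑ α ∈ Finset.range (m - 3), (1 : ZMod 2) = ((m - 3 : ℕ) : ZMod 2) := by
    rw [Finset.sum_const, Finset.card_range, nsmul_eq_mul, mul_one]
  have pt2 : ∀ a c : ZMod 2, a + c = c - a := by decide
  have h2 : ∑ α ∈ Finset.range (m - 3), (bitZ x (π α) + bitZ x (π (α + 1)))
      = bitZ x (π 0) + bitZ x (π (m - 3)) := by
    have : ∀ α, bitZ x (π α) + bitZ x (π (α + 1))
        = (fun β => bitZ x (π β)) (α + 1) - (fun β => bitZ x (π β)) α := by
      intro α; exact pt2 _ _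
    rw [Finset.sum_congr rfl (fun α _ => this α), Finset.sum_range_sub (fun β => bitZ x (π β))]
    generalize bitZ x (π 0) = A
    generalize bitZ x (π (m - 3)) = B
    revert A B; decide
  rw [h1, h2]
  unfold Qf
  ring

lemma nb_comp {s w j : ℕ} (hw : w < 2 ^ s) (hj : j < s) :
    nb (2 ^ s - 1 - w) j = 1 - nb w j := by
  have hd := decomp w j
  set Q := w / 2 ^ (j+1) with hQ
  set c := nb w j with hc
  set r := w % 2 ^ j with hr
  have hcle : c ≤ 1 := nb_le_one w j
  have hrlt : r < 2 ^ j := Nat.mod_lt _ (by positivity)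
  have hpow : (2:ℕ) ^ s = 2 ^ (s - j - 1) * 2 ^ (j+1) := by
    rw [← pow_add]; congr 1; omega
  have hQlt : Q < 2 ^ (s - j - 1) := by
    apply Nat.div_lt_of_lt_mul
    have : (2:ℕ) ^ (j+1) * 2 ^ (s - j - 1) = 2 ^ (s - j - 1) * 2 ^ (j+1) := mul_comm _ _
    omega
  have hmul : (Q + 1) * 2 ^ (j+1) ≤ 2 ^ (s - j - 1) * 2 ^ (j+1) :=
    Nat.mul_le_mul_right _ hQlt
  have hmul2 : (Q + 1) * 2 ^ (j+1) = Q * 2 ^ (j+1) + 2 ^ (j+1) := by ring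
  have hsub : (2 ^ (s - j - 1) - 1 - Q) * 2 ^ (j+1)
      = 2 ^ (s - j - 1) * 2 ^ (j+1) - 1 * 2 ^ (j+1) - Q * 2 ^ (j+1) := by
    rw [Nat.sub_mul, Nat.sub_mul]
  have hp2 : (2:ℕ) ^ (j+1) = 2 ^ j + 2 ^ j := by ring
  have key : 2 ^ s - 1 - w
      = (2 ^ (s - j - 1) - 1 - Q) * 2 ^ (j+1) + (1 - c) * 2 ^ j + (2 ^ j - 1 - r) := by
    rcases Nat.le_one_iff_eq_zero_or_eq_one.mp hcle with h | h <;> (rw [h] at hd ⊢; simp at hd ⊢; omega)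
  rw [key]
  exact nb_decomp_self (by omega) (by omega) _

lemma nb_allones {s j : ℕ} (hj : j < s) : nb (2 ^ s - 1) j = 1 := by
  have h := nb_comp (show 0 < 2 ^ s by positivity) hj
  simpa [nb] using h

end Main2

section Main3

variable {m : ℕ} {π : ℕ → ℕ}

lemma bitZ_one_sub {w j : ℕ} (hcomp : nb w j ≤ 1) : ((1 - nb w j : ℕ) : ZMod 2) = 1 - bitZ w j := by
  rw [bitZ_eq]
  interval_cases h : nb w j <;> decide

-- B quadrant : 2^(m-2) + z
lemma bitZ_B_low {z j : ℕ} (hj : j < m - 2) : bitZ (2 ^ (m-2) + z) j = bitZ z j := by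
  rw [bitZ_eq, bitZ_eq]
  have h : 2 ^ (m-2) + z = 1 * 2 ^ (m-2) + z := by ring
  rw [h, nb_mul_add_low hj]

lemma bitZ_B_m2 {z : ℕ} (hz : z < 2 ^ (m-2)) : bitZ (2 ^ (m-2) + z) (m-2) = 1 := by
  rw [bitZ_eq]
  have h : 2 ^ (m-2) + z = 1 * 2 ^ (m-2) + z := by ring
  rw [h, nb_mul_add_high (le_refl _) 1 hz, Nat.sub_self]
  decide

lemma bitZ_B_m1 (hm : 4 ≤ m) {z : ℕ} (hz : z < 2 ^ (m-2)) : bitZ (2 ^ (m-2) + z) (m-1) = 0 := by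
  rw [bitZ_eq]
  have h : 2 ^ (m-2) + z = 1 * 2 ^ (m-2) + z := by ring
  rw [h, nb_mul_add_high (by omega) 1 hz]
  have h1 : m - 1 - (m - 2) = 1 := by omega
  rw [h1]; decide

-- C quadrant : 2^(m-1) + z
lemma bitZ_C_low (hm : 4 ≤ m) {z j : ℕ} (hj : j < m - 2) : bitZ (2 ^ (m-1) + z) j = bitZ z j := by
  rw [bitZ_eq, bitZ_eq]
  have h : 2 ^ (m-1) + z = 2 * 2 ^ (m-2) + z := by
    rw [← pow_succ']; congr 2; omega
  rw [h, nb_mul_add_low hj]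

lemma bitZ_C_m2 (hm : 4 ≤ m) {z : ℕ} (hz : z < 2 ^ (m-2)) : bitZ (2 ^ (m-1) + z) (m-2) = 0 := by
  rw [bitZ_eq]
  have h : 2 ^ (m-1) + z = 2 * 2 ^ (m-2) + z := by
    rw [← pow_succ']; congr 2; omega
  rw [h, nb_mul_add_high (le_refl _) 2 hz, Nat.sub_self]
  decide

lemma bitZ_C_m1 (hm : 4 ≤ m) {z : ℕ} (hz : z < 2 ^ (m-2)) : bitZ (2 ^ (m-1) + z) (m-1) = 1 := by
  rw [bitZ_eq]
  have h : 2 ^ (m-1) + z = 2 * 2 ^ (m-2) + z := by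
    rw [← pow_succ']; congr 2; omega
  rw [h, nb_mul_add_high (by omega) 2 hz]
  have h1 : m - 1 - (m - 2) = 1 := by omega
  rw [h1]; decide

-- A index : 2^(m-2) - 1
lemma bitZ_A_low {j : ℕ} (hj : j < m - 2) : bitZ (2 ^ (m-2) - 1) j = 1 := by
  rw [bitZ_eq, nb_allones hj]; decide

lemma bitZ_A_m2 : bitZ (2 ^ (m-2) - 1 : ℕ) (m-2) = 0 := by
  rw [bitZ_eq]
  have h : 2 ^ (m-2) - 1 = 0 * 2 ^ (m-2) + (2 ^ (m-2) - 1) := by ring_nf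
  rw [h, nb_mul_add_high (le_refl _) 0 (Nat.sub_lt (by positivity) one_pos), Nat.sub_self]
  simp [nb]

lemma bitZ_A_m1 (hm : 4 ≤ m) : bitZ (2 ^ (m-2) - 1 : ℕ) (m-1) = 0 := by
  rw [bitZ_eq]
  have h : 2 ^ (m-2) - 1 = 0 * 2 ^ (m-2) + (2 ^ (m-2) - 1) := by ring_nf
  rw [h, nb_mul_add_high (by omega) 0 (Nat.sub_lt (by positivity) one_pos)]
  simp [nb]

-- D index : 2^(m-1) + 2^(m-2)
lemma bitZ_D_low (hm : 4 ≤ m) {j : ℕ} (hj : j < m - 2) :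
    bitZ (2 ^ (m-1) + 2 ^ (m-2)) j = 0 := by
  rw [bitZ_eq]
  have h : 2 ^ (m-1) + 2 ^ (m-2) = 3 * 2 ^ (m-2) + 0 := by
    have : (2:ℕ) ^ (m-1) = 2 * 2 ^ (m-2) := by rw [← pow_succ']; congr 1; omega
    omega
  rw [h, nb_mul_add_low hj]
  simp [nb]

lemma bitZ_D_m2 (hm : 4 ≤ m) : bitZ (2 ^ (m-1) + 2 ^ (m-2) : ℕ) (m-2) = 1 := by
  rw [bitZ_eq]
  have h : 2 ^ (m-1) + 2 ^ (m-2) = 3 * 2 ^ (m-2) + 0 := by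
    have : (2:ℕ) ^ (m-1) = 2 * 2 ^ (m-2) := by rw [← pow_succ']; congr 1; omega
    omega
  rw [h, nb_mul_add_high (le_refl _) 3 (by positivity), Nat.sub_self]
  decide

lemma bitZ_D_m1 (hm : 4 ≤ m) : bitZ (2 ^ (m-1) + 2 ^ (m-2) : ℕ) (m-1) = 1 := by
  rw [bitZ_eq]
  have h : 2 ^ (m-1) + 2 ^ (m-2) = 3 * 2 ^ (m-2) + 0 := by
    have : (2:ℕ) ^ (m-1) = 2 * 2 ^ (m-2) := by rw [← pow_succ']; congr 1; omega
    omega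
  rw [h, nb_mul_add_high (by omega) 3 (by positivity)]
  have h1 : m - 1 - (m - 2) = 1 := by omega
  rw [h1]; decide

lemma Qf_comp (hm : 4 ≤ m) (hπm : ∀ α, α < m - 2 → π α < m - 2) {w : ℕ} (hw : w < 2 ^ (m-2)) :
    Qf m π (2 ^ (m-2) - 1 - w)
      = Qf m π w + bitZ w (π 0) + bitZ w (π (m-3)) + ((m - 3 : ℕ) : ZMod 2) := by
  have hbit : ∀ j, j < m - 2 → bitZ (2 ^ (m-2) - 1 - w) j = 1 - bitZ w j := by
    intro j hj
    rw [bitZ_eq, nb_comp hw hj, bitZ_one_sub (nb_le_one w j)]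
  have step : Qf m π (2 ^ (m-2) - 1 - w)
      = ∑ α ∈ Finset.range (m-3), (1 - bitZ w (π α)) * (1 - bitZ w (π (α+1))) := by
    unfold Qf
    apply Finset.sum_congr rfl
    intro α hα
    rw [Finset.mem_range] at hα
    rw [hbit _ (hπm _ (by omega)), hbit _ (hπm _ (by omega))]
  rw [step, Qbar_eq hm w]

lemma LinF_comp (e f : ℕ → ZMod 2) {w : ℕ} (hw : w < 2 ^ (m-2)) :
    LinF m e f (2 ^ (m-2) - 1 - w) + LinF m e f w
      = (∑ i ∈ Finset.range (m-2), e i) + ∑ i ∈ Finset.range (m-2), f i := by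
  have hbit : ∀ j, j < m - 2 → bitZ (2 ^ (m-2) - 1 - w) j = 1 - bitZ w j := by
    intro j hj
    rw [bitZ_eq, nb_comp hw hj, bitZ_one_sub (nb_le_one w j)]
  have key : ∀ i ∈ Finset.range (m-2),
      (e i * bitZ (2 ^ (m-2) - 1 - w) i + f i * (1 - bitZ (2 ^ (m-2) - 1 - w) i))
        + (e i * bitZ w i + f i * (1 - bitZ w i)) = e i + f i := by
    intro i hi
    rw [Finset.mem_range] at hi
    rw [hbit i hi]
    generalize bitZ w i = B
    generalize e i = E
    generalize f i = F
    revert B E F; decide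
  have expand : LinF m e f (2 ^ (m-2) - 1 - w) + LinF m e f w
      = ∑ i ∈ Finset.range (m - 2),
          ((e i * bitZ (2 ^ (m-2) - 1 - w) i + f i * (1 - bitZ (2 ^ (m-2) - 1 - w) i))
            + (e i * bitZ w i + f i * (1 - bitZ w i))) := by
    unfold LinF
    rw [Finset.sum_add_distrib, Finset.sum_add_distrib, Finset.sum_add_distrib]
    try ring
  rw [expand, Finset.sum_congr rfl key, Finset.sum_add_distrib]

lemma gval_B (hm : 4 ≤ m) (hπm : ∀ α, α < m - 2 → π α < m - 2) (e f : ℕ → ZMod 2)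
    {z : ℕ} (hz : z < 2 ^ (m-2)) (d : ZMod 2) :
    gbf m π e f d (bitZ (2 ^ (m-2) + z))
      = Qf m π z + d * bitZ z (π (m-3)) + LinF m e f z := by
  have hζ : zeta m π d (bitZ (2 ^ (m-2) + z)) = Qf m π z + d * bitZ z (π (m-3)) := by
    unfold zeta Qf
    rw [bitZ_B_low (hπm _ (by omega))]
    congr 1
    apply Finset.sum_congr rfl
    intro α hα
    rw [Finset.mem_range] at hα
    rw [bitZ_B_low (hπm _ (by omega)), bitZ_B_low (hπm _ (by omega))]
  have hLe : (∑ i ∈ Finset.range (m-2), e i * bitZ (2 ^ (m-2) + z) i)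
      = ∑ i ∈ Finset.range (m-2), e i * bitZ z i := by
    apply Finset.sum_congr rfl
    intro i hi
    rw [Finset.mem_range] at hi
    rw [bitZ_B_low hi]
  have hLf : (∑ i ∈ Finset.range (m-2), f i * (1 - bitZ (2 ^ (m-2) + z) i))
      = ∑ i ∈ Finset.range (m-2), f i * (1 - bitZ z i) := by
    apply Finset.sum_congr rfl
    intro i hi
    rw [Finset.mem_range] at hi
    rw [bitZ_B_low hi]
  unfold gbf LinF
  rw [bitZ_B_m2 hz, bitZ_B_m1 hm hz, hζ, hLe, hLf]
  ring

lemma gval_C (hm : 4 ≤ m) (hπm : ∀ α, α < m - 2 → π α < m - 2) (e f : ℕ → ZMod 2)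
    {z : ℕ} (hz : z < 2 ^ (m-2)) (d : ZMod 2) :
    gbf m π e f d (bitZ (2 ^ (m-1) + z))
      = Qf m π z + bitZ z (π 0) + d * bitZ z (π (m-3)) + LinF m e f z
        + ((m - 3 : ℕ) : ZMod 2) := by
  have hη : eta m π d (bitZ (2 ^ (m-1) + z))
      = Qf m π z + bitZ z (π 0) + d * bitZ z (π (m-3)) + ((m - 3 : ℕ) : ZMod 2) := by
    unfold eta
    have hsum : (∑ α ∈ Finset.range (m-3),
        (1 - bitZ (2 ^ (m-1) + z) (π α)) * (1 - bitZ (2 ^ (m-1) + z) (π (α+1))))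
        = ∑ α ∈ Finset.range (m-3), (1 - bitZ z (π α)) * (1 - bitZ z (π (α+1))) := by
      apply Finset.sum_congr rfl
      intro α hα
      rw [Finset.mem_range] at hα
      rw [bitZ_C_low hm (hπm _ (by omega)), bitZ_C_low hm (hπm _ (by omega))]
    rw [hsum, Qbar_eq hm z, bitZ_C_low hm (hπm _ (by omega))]
    generalize Qf m π z = Q
    generalize bitZ z (π 0) = A
    generalize bitZ z (π (m-3)) = B
    generalize ((m - 3 : ℕ) : ZMod 2) = μ
    revert Q A B μ d
    decide
  have hLe : (∑ i ∈ Finset.range (m-2), e i * bitZ (2 ^ (m-1) + z) i)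
      = ∑ i ∈ Finset.range (m-2), e i * bitZ z i := by
    apply Finset.sum_congr rfl
    intro i hi
    rw [Finset.mem_range] at hi
    rw [bitZ_C_low hm hi]
  have hLf : (∑ i ∈ Finset.range (m-2), f i * (1 - bitZ (2 ^ (m-1) + z) i))
      = ∑ i ∈ Finset.range (m-2), f i * (1 - bitZ z i) := by
    apply Finset.sum_congr rfl
    intro i hi
    rw [Finset.mem_range] at hi
    rw [bitZ_C_low hm hi]
  unfold gbf LinF
  rw [bitZ_C_m2 hm hz, bitZ_C_m1 hm hz, hη, hLe, hLf]
  ring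

lemma gval_A (hm : 4 ≤ m) (e f : ℕ → ZMod 2) (d : ZMod 2) :
    gbf m π e f d (bitZ (2 ^ (m-2) - 1))
      = d + ∑ i ∈ Finset.range (m-2), e i := by
  have hLe : (∑ i ∈ Finset.range (m-2), e i * bitZ (2 ^ (m-2) - 1 : ℕ) i)
      = ∑ i ∈ Finset.range (m-2), e i := by
    apply Finset.sum_congr rfl
    intro i hi
    rw [Finset.mem_range] at hi
    rw [bitZ_A_low hi, mul_one]
  have hLf : (∑ i ∈ Finset.range (m-2), f i * (1 - bitZ (2 ^ (m-2) - 1 : ℕ) i)) = 0 := by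
    rw [Finset.sum_eq_zero]
    intro i hi
    rw [Finset.mem_range] at hi
    rw [bitZ_A_low hi]
    ring
  unfold gbf
  rw [bitZ_A_m2, bitZ_A_m1 hm, hLe, hLf]
  ring

lemma gval_D (hm : 4 ≤ m) (e f : ℕ → ZMod 2) (d : ZMod 2) :
    gbf m π e f d (bitZ (2 ^ (m-1) + 2 ^ (m-2)))
      = 1 + ∑ i ∈ Finset.range (m-2), f i := by
  have hLe : (∑ i ∈ Finset.range (m-2), e i * bitZ (2 ^ (m-1) + 2 ^ (m-2) : ℕ) i) = 0 := by
    rw [Finset.sum_eq_zero]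
    intro i hi
    rw [Finset.mem_range] at hi
    rw [bitZ_D_low hm hi, mul_zero]
  have hLf : (∑ i ∈ Finset.range (m-2), f i * (1 - bitZ (2 ^ (m-1) + 2 ^ (m-2) : ℕ) i))
      = ∑ i ∈ Finset.range (m-2), f i := by
    apply Finset.sum_congr rfl
    intro i hi
    rw [Finset.mem_range] at hi
    rw [bitZ_D_low hm hi]
    ring
  unfold gbf
  rw [bitZ_D_m2 hm, bitZ_D_m1 hm, hLe, hLf]
  ring

end Main3

def zof (n k : ℕ) : ℕ := if k ≤ n then k - 1 else k - 1 - n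

def bstar (m : ℕ) (π : ℕ → ℕ) (z w : ℕ) : ℕ :=
  π (Nat.findGreatest (fun α => nb z (π α) ≠ nb w (π α)) (m-3) + 1)

def invP (m τ : ℕ) (π : ℕ → ℕ) (p : ℕ × ZMod 2) : ℕ × ZMod 2 :=
  if p.1 = 0 ∨ p.1 = 2*2^(m-2)+1-τ then
    (if nb (τ-1) (π (m-3)) = 1 then (2*2^(m-2)+1-τ - p.1, p.2) else (p.1, p.2+1))
  else
    if zof (2^(m-2)) p.1 = zof (2^(m-2)) (p.1+τ) then
      (flipb (zof (2^(m-2)) p.1) (π 0) + 1, p.2)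
    else if nb (zof (2^(m-2)) p.1) (π (m-3)) = nb (zof (2^(m-2)) (p.1+τ)) (π (m-3)) then
      ((if p.1 ≤ 2^(m-2) then 0 else 2^(m-2))
          + flipb (zof (2^(m-2)) p.1)
              (bstar m π (zof (2^(m-2)) p.1) (zof (2^(m-2)) (p.1+τ))) + 1, p.2)
    else (p.1, p.2 + 1)

lemma findGreatest_congr {P Q : ℕ → Prop} [DecidablePred P] [DecidablePred Q]
    (h : ∀ i, P i ↔ Q i) (n : ℕ) : Nat.findGreatest P n = Nat.findGreatest Q n := by
  induction n with
  | zero => rfl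
  | succ n ih =>
    rw [Nat.findGreatest_succ, Nat.findGreatest_succ, ih]
    by_cases hq : Q (n+1)
    · rw [if_pos hq, if_pos ((h (n+1)).mpr hq)]
    · rw [if_neg hq, if_neg (fun hp => hq ((h (n+1)).mp hp))]

lemma dplus2 (d : ZMod 2) : d + 1 + 1 = d := by revert d; decide

section Main4

variable {m : ℕ} {π : ℕ → ℕ}

lemma zof_lt {t : ℕ} (h1 : 1 ≤ t) (h2 : t ≤ 2*2^(m-2)) : zof (2^(m-2)) t < 2^(m-2) := by
  have hn1 : 1 ≤ 2^(m-2) := Nat.one_le_two_pow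
  unfold zof
  split <;> omega

lemma Eval_slot (hm : 4 ≤ m) (hπm : ∀ α, α < m - 2 → π α < m - 2) (e f : ℕ → ZMod 2)
    {t : ℕ} (h1 : 1 ≤ t) (h2 : t ≤ 2*2^(m-2)) (d : ZMod 2) :
    gbf m π e f d (bitZ (2^(m-2) - 1 + t))
      = Qf m π (zof (2^(m-2)) t) + d * bitZ (zof (2^(m-2)) t) (π (m-3))
        + LinF m e f (zof (2^(m-2)) t)
        + (if 2^(m-2) < t then bitZ (zof (2^(m-2)) t) (π 0) + ((m-3 : ℕ) : ZMod 2) else 0) := by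
  have hn1 : 1 ≤ 2^(m-2) := Nat.one_le_two_pow
  by_cases ht : t ≤ 2^(m-2)
  · have hz : zof (2^(m-2)) t = t - 1 := by unfold zof; rw [if_pos ht]
    have hlt : t - 1 < 2^(m-2) := by omega
    have hidx : 2^(m-2) - 1 + t = 2^(m-2) + (t - 1) := by omega
    rw [hidx, hz, if_neg (by omega), add_zero]
    rw [← hz] at hlt ⊢
    exact gval_B hm hπm e f (hz ▸ hlt) d
  · have hz : zof (2^(m-2)) t = t - 1 - 2^(m-2) := by unfold zof; rw [if_neg ht]
    have hlt : t - 1 - 2^(m-2) < 2^(m-2) := by omega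
    have hpow : (2:ℕ)^(m-1) = 2 * 2^(m-2) := by rw [← pow_succ']; congr 1; omega
    have hidx : 2^(m-2) - 1 + t = 2^(m-1) + (t - 1 - 2^(m-2)) := by omega
    rw [hidx, hz, if_pos (by omega)]
    rw [gval_C hm hπm e f hlt d]
    ring

end Main4

lemma char2_solve {a b c : ZMod 2} (h : a + b = c) : a = c + b := by
  rw [← h, add_assoc, CharTwo.add_self_eq_zero, add_zero]

lemma main_claim {m : ℕ} {π : ℕ → ℕ} (hm : 4 ≤ m)
    (hπ : Set.BijOn π (Set.Iio (m-2)) (Set.Iio (m-2))) (e f : ℕ → ZMod 2)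
    {τ : ℕ} (hτ1 : 1 ≤ τ) (hτ2 : τ ≤ 2^(m-2)) (k : ℕ) (d : ZMod 2)
    (hk : k < 2*2^(m-2)+2-τ) :
    (invP m τ π (k,d)).1 < 2*2^(m-2)+2-τ ∧
    invP m τ π (invP m τ π (k,d)) = (k,d) ∧
    chiZ (gbf m π e f d (bitZ (2^(m-2)-1+k)) + gbf m π e f d (bitZ (2^(m-2)-1+(k+τ))))
      + chiZ (gbf m π e f (invP m τ π (k,d)).2 (bitZ (2^(m-2)-1+(invP m τ π (k,d)).1))
          + gbf m π e f (invP m τ π (k,d)).2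
              (bitZ (2^(m-2)-1+((invP m τ π (k,d)).1+τ)))) = 0 := by
  have hn1 : (1:ℕ) ≤ 2^(m-2) := Nat.one_le_two_pow
  have hπm : ∀ α, α < m - 2 → π α < m - 2 := fun α h => hπ.mapsTo h
  have hinj : Set.InjOn π (Set.Iio (m-2)) := hπ.injOn
  by_cases hbd : k = 0 ∨ k = 2*2^(m-2)+1-τ
  · -- boundary case
    by_cases hc : nb (τ-1) (π (m-3)) = 1
    · -- swap 0 ↔ K1, keep d
      have hinv : invP m τ π (k,d) = (2*2^(m-2)+1-τ - k, d) := by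
        simp only [invP]; rw [if_pos hbd, if_pos hc]
      rw [hinv]
      have himg : 2*2^(m-2)+1-τ - k = 0 ∨ 2*2^(m-2)+1-τ - k = 2*2^(m-2)+1-τ := by
        rcases hbd with h | h <;> omega
      refine ⟨by omega, ?_, ?_⟩
      · have hinv2 : invP m τ π (2*2^(m-2)+1-τ - k, d) = (2*2^(m-2)+1-τ - (2*2^(m-2)+1-τ - k), d) := by
          simp only [invP]; rw [if_pos himg, if_pos hc]
        rw [hinv2]
        have : 2*2^(m-2)+1-τ - (2*2^(m-2)+1-τ - k) = k := by rcases hbd with h | h <;> omega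
        rw [this]
      · -- cancellation
        have key : ∀ dd : ZMod 2,
            chiZ (gbf m π e f dd (bitZ (2^(m-2)-1+0)) + gbf m π e f dd (bitZ (2^(m-2)-1+(0+τ))))
            + chiZ (gbf m π e f dd (bitZ (2^(m-2)-1+(2*2^(m-2)+1-τ)))
                + gbf m π e f dd (bitZ (2^(m-2)-1+((2*2^(m-2)+1-τ)+τ)))) = 0 := by
          intro dd
          have hpow : (2:ℕ)^(m-1) = 2 * 2^(m-2) := by rw [← pow_succ']; congr 1; omega
          have e0 : 2^(m-2)-1+0 = 2^(m-2)-1 := by omega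
          have e1 : 0 + τ = τ := by omega
          have eD : 2^(m-2)-1+((2*2^(m-2)+1-τ)+τ) = 2^(m-1)+2^(m-2) := by omega
          rw [e0, e1, eD, gval_A hm e f dd, gval_D hm e f dd,
             Eval_slot hm hπm e f hτ1 (by omega) dd,
             Eval_slot hm hπm e f (by omega) (by omega) dd]
          have hw0 : zof (2^(m-2)) τ = τ - 1 := by unfold zof; rw [if_pos hτ2]
          have hz1 : zof (2^(m-2)) (2*2^(m-2)+1-τ) = 2^(m-2)-1-(τ-1) := by
            unfold zof; rw [if_neg (by omega)]; omega
          rw [hw0, hz1, if_neg (by omega : ¬ 2^(m-2) < τ), if_pos (by omega : 2^(m-2) < 2*2^(m-2)+1-τ)]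
          have hQ : Qf m π (2^(m-2)-1-(τ-1))
              = Qf m π (τ-1) + bitZ (τ-1) (π 0) + bitZ (τ-1) (π (m-3)) + ((m-3:ℕ) : ZMod 2) :=
            Qf_comp hm hπm (by omega)
          have hLp := LinF_comp (m := m) e f (show τ-1 < 2^(m-2) by omega)
          have hp0 : bitZ (2^(m-2)-1-(τ-1)) (π 0) + bitZ (τ-1) (π 0) = 1 := by
            apply bitZ_ne_sum
            rw [nb_comp (by omega) (hπm 0 (by omega))]
            have := nb_le_one (τ-1) (π 0)
            omega
          have hj0w : bitZ (τ-1) (π (m-3)) = 1 := by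
            rw [bitZ_eq, hc]; norm_num
          have hj0z : bitZ (2^(m-2)-1-(τ-1)) (π (m-3)) = 0 := by
            rw [bitZ_eq, nb_comp (by omega) (hπm _ (by omega)), hc]; norm_num
          apply chiZ_cancel
          rw [hQ, hj0w, hj0z, char2_solve hLp, char2_solve hp0]
          generalize Qf m π (τ-1) = Q
          generalize bitZ (τ-1) (π 0) = A
          generalize LinF m e f (τ-1) = L
          generalize (∑ i ∈ Finset.range (m-2), e i) = SE
          generalize (∑ i ∈ Finset.range (m-2), f i) = SF
          generalize ((m-3:ℕ) : ZMod 2) = u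
          revert Q A L SE SF u dd
          decide
        rcases hbd with h | h
        · subst h
          have h2 : 2*2^(m-2)+1-τ - 0 = 2*2^(m-2)+1-τ := by omega
          rw [h2]
          exact key d
        · subst h
          have h2 : 2*2^(m-2)+1-τ - (2*2^(m-2)+1-τ) = 0 := by omega
          rw [h2]
          have := key d
          linarith [key d]
    · -- boundary, swap d
      have hinv : invP m τ π (k,d) = (k, d+1) := by
        simp only [invP]; rw [if_pos hbd, if_neg hc]
      rw [hinv]
      refine ⟨hk, ?_, ?_⟩
      · simp only [invP]; rw [if_pos hbd, if_neg hc, dplus2]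
      · have hpow : (2:ℕ)^(m-1) = 2 * 2^(m-2) := by rw [← pow_succ']; congr 1; omega
        have hj0nb : nb (τ-1) (π (m-3)) = 0 := by
          have := nb_le_one (τ-1) (π (m-3)); omega
        rcases hbd with h | h
        · subst h
          have e0 : 2^(m-2)-1+0 = 2^(m-2)-1 := by omega
          have e1 : 0 + τ = τ := by omega
          rw [e0, e1, gval_A hm e f d, gval_A hm e f (d+1),
             Eval_slot (t := τ) hm hπm e f hτ1 (by omega) d,
             Eval_slot (t := τ) hm hπm e f hτ1 (by omega) (d+1)]
          have hw0 : zof (2^(m-2)) τ = τ - 1 := by unfold zof; rw [if_pos hτ2]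
          rw [hw0, if_neg (by omega : ¬ 2^(m-2) < τ)]
          have hj0w : bitZ (τ-1) (π (m-3)) = 0 := by
            rw [bitZ_eq, hj0nb]; norm_num
          apply chiZ_cancel
          rw [hj0w]
          generalize Qf m π (τ-1) = Q
          generalize LinF m e f (τ-1) = L
          generalize (∑ i ∈ Finset.range (m-2), e i) = SE
          clear hinv
          revert Q L SE d
          decide
        · subst h
          have eD : 2^(m-2)-1+((2*2^(m-2)+1-τ)+τ) = 2^(m-1)+2^(m-2) := by omega
          rw [eD, gval_D hm e f d, gval_D hm e f (d+1),
             Eval_slot (t := 2*2^(m-2)+1-τ) hm hπm e f (by omega) (by omega) d,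
             Eval_slot (t := 2*2^(m-2)+1-τ) hm hπm e f (by omega) (by omega) (d+1)]
          have hz1 : zof (2^(m-2)) (2*2^(m-2)+1-τ) = 2^(m-2)-1-(τ-1) := by
            unfold zof; rw [if_neg (by omega)]; omega
          rw [hz1, if_pos (by omega : 2^(m-2) < 2*2^(m-2)+1-τ)]
          have hj0z : bitZ (2^(m-2)-1-(τ-1)) (π (m-3)) = 1 := by
            rw [bitZ_eq, nb_comp (by omega) (hπm _ (by omega)), hj0nb]; norm_num
          apply chiZ_cancel
          rw [hj0z]
          generalize Qf m π (2^(m-2)-1-(τ-1)) = Q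
          generalize LinF m e f (2^(m-2)-1-(τ-1)) = L
          generalize bitZ (2^(m-2)-1-(τ-1)) (π 0) = P
          generalize (∑ i ∈ Finset.range (m-2), f i) = SF
          generalize ((m-3:ℕ) : ZMod 2) = u
          clear hinv
          revert Q L P SF u d
          decide
  · -- middle
    have hbd2 := hbd
    push_neg at hbd2
    have hk1 : 1 ≤ k := by omega
    have hk2 : k ≤ 2*2^(m-2) - τ := by omega
    by_cases hzw : zof (2^(m-2)) k = zof (2^(m-2)) (k+τ)
    · -- z = w case (τ = 2^(m-2))
      have htk : k ≤ 2^(m-2) ∧ τ = 2^(m-2) := by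
        unfold zof at hzw; split_ifs at hzw <;> omega
      obtain ⟨hkn, hτn⟩ := htk
      have hz : zof (2^(m-2)) k = k-1 := by unfold zof; rw [if_pos hkn]
      have hw : zof (2^(m-2)) (k+τ) = k-1 := by rw [← hzw, hz]
      have hzlt : k - 1 < 2^(m-2) := by omega
      have hp0lt : π 0 < m-2 := hπm 0 (by omega)
      have hz'lt : flipb (k-1) (π 0) < 2^(m-2) := flipb_lt hzlt hp0lt
      have hinv : invP m τ π (k,d) = (flipb (k-1) (π 0) + 1, d) := by
        simp only [invP]; rw [if_neg hbd, if_pos hzw, hz]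
      rw [hinv]
      have hzofk' : zof (2^(m-2)) (flipb (k-1) (π 0) + 1) = flipb (k-1) (π 0) := by
        unfold zof; rw [if_pos (by omega)]; omega
      have hzofk't : zof (2^(m-2)) (flipb (k-1) (π 0) + 1 + τ) = flipb (k-1) (π 0) := by
        unfold zof; rw [if_neg (by omega)]; omega
      refine ⟨by omega, ?_, ?_⟩
      · simp only [invP]
        rw [if_neg (by push_neg; omega), hzofk', hzofk't, if_pos rfl, flipb_flipb]
        have hkk : k - 1 + 1 = k := by omega
        rw [hkk]
      · rw [Eval_slot (t := k) hm hπm e f hk1 (by omega) d,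
           Eval_slot (t := k+τ) hm hπm e f (by omega) (by omega) d,
           Eval_slot (t := flipb (k-1) (π 0) + 1) hm hπm e f (by omega) (by omega) d,
           Eval_slot (t := flipb (k-1) (π 0) + 1 + τ) hm hπm e f (by omega) (by omega) d]
        rw [hz, hw, hzofk', hzofk't,
           if_neg (by omega : ¬ 2^(m-2) < k), if_pos (by omega : 2^(m-2) < k+τ),
           if_neg (by omega : ¬ 2^(m-2) < flipb (k-1) (π 0) + 1),
           if_pos (by omega : 2^(m-2) < flipb (k-1) (π 0) + 1 + τ)]
        apply chiZ_cancel
        rw [bitZ_flip_self (k-1) (π 0)]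
        generalize Qf m π (k-1) = Q
        generalize Qf m π (flipb (k-1) (π 0)) = Q'
        generalize bitZ (k-1) (π (m-3)) = B
        generalize bitZ (flipb (k-1) (π 0)) (π (m-3)) = B'
        generalize LinF m e f (k-1) = L
        generalize LinF m e f (flipb (k-1) (π 0)) = L'
        generalize bitZ (k-1) (π 0) = P
        generalize ((m-3:ℕ) : ZMod 2) = u
        clear hinv
        revert Q Q' B B' L L' P u d
        decide
    · by_cases hj0 : nb (zof (2^(m-2)) k) (π (m-3)) = nb (zof (2^(m-2)) (k+τ)) (π (m-3))
      · -- flip case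
        set z := zof (2^(m-2)) k with hzdef
        set w := zof (2^(m-2)) (k+τ) with hwdef
        have hzlt : z < 2^(m-2) := zof_lt (by omega) (by omega)
        have hwlt : w < 2^(m-2) := zof_lt (by omega) (by omega)
        obtain ⟨j, hjlt, hjne⟩ := exists_nb_ne hzw hzlt hwlt
        obtain ⟨α, hαlt, hπα⟩ : ∃ α, α < m - 2 ∧ π α = j := by
          obtain ⟨α, hα, hπα⟩ := hπ.surjOn (Set.mem_Iio.mpr hjlt)
          exact ⟨α, Set.mem_Iio.mp hα, hπα⟩
        set A := Nat.findGreatest (fun α => nb z (π α) ≠ nb w (π α)) (m-3) with hAdef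
        have hPA : nb z (π A) ≠ nb w (π A) := by
          have h := Nat.findGreatest_spec (P := fun α => nb z (π α) ≠ nb w (π α))
            (show α ≤ m-3 by omega) (by show nb z (π α) ≠ nb w (π α); rw [hπα]; exact hjne)
          rw [← hAdef] at h
          exact h
        have hAle : A ≤ m-3 := by rw [hAdef]; exact Nat.findGreatest_le _
        have hAlt : A < m-3 := by
          rcases Nat.lt_or_ge A (m-3) with h | h
          · exact h
          · exfalso
            have hA3 : A = m-3 := by omega
            rw [hA3] at hPA
            exact hPA hj0
        have hsame : ∀ β, A < β → β ≤ m-3 → nb z (π β) = nb w (π β) := by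
          intro β h1 h2
          by_contra hcon
          rw [hAdef] at h1
          exact (Nat.findGreatest_is_greatest h1 h2) hcon
        have hblt : π (A+1) < m - 2 := hπm _ (by omega)
        have hbsame : nb z (π (A+1)) = nb w (π (A+1)) := hsame (A+1) (by omega) (by omega)
        have hbst : bstar m π z w = π (A+1) := rfl
        set z' := flipb z (π (A+1)) with hz'def
        set w' := flipb w (π (A+1)) with hw'def
        have hz'lt : z' < 2^(m-2) := flipb_lt hzlt hblt
        have hw'lt : w' < 2^(m-2) := flipb_lt hwlt hblt
        -- algebraic facts
        have hQz := Qf_flip (γ := A+1) hm hinj (by omega) (by omega) z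
        have hQw := Qf_flip (γ := A+1) hm hinj (by omega) (by omega) w
        rw [Nat.add_sub_cancel, ← hz'def] at hQz
        rw [Nat.add_sub_cancel, ← hw'def] at hQw
        have hQQ : Qf m π z' + Qf m π w' = Qf m π z + Qf m π w + 1 := by
          have hc1 : bitZ z (π A) + bitZ w (π A) = 1 := bitZ_ne_sum hPA
          by_cases hA3 : A+1 < m-3
          · rw [if_pos hA3] at hQz hQw
            have hc2 : bitZ z (π (A+1+1)) = bitZ w (π (A+1+1)) :=
              bitZ_eq_of_nb (hsame _ (by omega) (by omega))
            generalize Qf m π z' = q1 at hQz ⊢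
            generalize Qf m π w' = q2 at hQw ⊢
            generalize Qf m π z = q3 at hQz ⊢
            generalize Qf m π w = q4 at hQw ⊢
            generalize bitZ z (π A) = q5 at hQz hc1 ⊢
            generalize bitZ w (π A) = q6 at hQw hc1 ⊢
            generalize bitZ z (π (A+1+1)) = q7 at hQz hc2 ⊢
            generalize bitZ w (π (A+1+1)) = q8 at hQw hc2 ⊢
            revert hQz hQw hc1 hc2
            revert q1 q2 q3 q4 q5 q6 q7 q8
            decide
          · rw [if_neg hA3] at hQz hQw
            generalize Qf m π z' = q1 at hQz ⊢
            generalize Qf m π w' = q2 at hQw ⊢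
            generalize Qf m π z = q3 at hQz ⊢
            generalize Qf m π w = q4 at hQw ⊢
            generalize bitZ z (π A) = q5 at hQz hc1 ⊢
            generalize bitZ w (π A) = q6 at hQw hc1 ⊢
            revert hQz hQw hc1
            revert q1 q2 q3 q4 q5 q6
            decide
        have hBB : bitZ z' (π (m-3)) + bitZ w' (π (m-3))
            = bitZ z (π (m-3)) + bitZ w (π (m-3)) := by
          by_cases hbb : π (m-3) = π (A+1)
          · rw [hbb, hz'def, hw'def, bitZ_flip_self, bitZ_flip_self]
            generalize bitZ z (π (A+1)) = q1
            generalize bitZ w (π (A+1)) = q2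
            revert q1 q2; decide
          · rw [hz'def, hw'def, bitZ_flip_ne hbb, bitZ_flip_ne hbb]
        have hLL : LinF m e f z' + LinF m e f w' = LinF m e f z + LinF m e f w := by
          have h1 := LinF_flip (m := m) e f hblt z
          have h2 := LinF_flip (m := m) e f hblt w
          rw [← hz'def] at h1
          rw [← hw'def] at h2
          generalize LinF m e f z' = q1 at h1 ⊢
          generalize LinF m e f w' = q2 at h2 ⊢
          generalize LinF m e f z = q3 at h1 ⊢
          generalize LinF m e f w = q4 at h2 ⊢
          generalize e (π (A+1)) = q5 at h1 h2
          generalize f (π (A+1)) = q6 at h1 h2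
          revert h1 h2
          revert q1 q2 q3 q4 q5 q6
          decide
        have hπ0ne : π 0 ≠ π (A+1) := by
          intro hcc
          have := hinj (Set.mem_Iio.mpr (show 0 < m-2 by omega))
            (Set.mem_Iio.mpr (show A+1 < m-2 by omega)) hcc
          omega
        have hp0 : bitZ z' (π 0) = bitZ z (π 0) := by
          rw [hz'def, bitZ_flip_ne hπ0ne]
        have hq0 : bitZ w' (π 0) = bitZ w (π 0) := by
          rw [hw'def, bitZ_flip_ne hπ0ne]
        have hnb' : nb z' (π (m-3)) = nb w' (π (m-3)) := by
          by_cases hbb : π (m-3) = π (A+1)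
          · rw [hbb, hz'def, hw'def, nb_flipb_self, nb_flipb_self, hbsame]
          · rw [hz'def, hw'def, nb_flipb_ne hbb, nb_flipb_ne hbb]
            exact hj0
        have hPP : ∀ i, ((fun α => nb z' (π α) ≠ nb w' (π α)) i
            ↔ (fun α => nb z (π α) ≠ nb w (π α)) i) := by
          intro i
          simp only []
          by_cases hbb : π i = π (A+1)
          · rw [hbb, hz'def, hw'def, nb_flipb_self, nb_flipb_self]
            have h1 := nb_le_one z (π (A+1))
            have h2 := nb_le_one w (π (A+1))
            omega
          · rw [hz'def, hw'def, nb_flipb_ne hbb, nb_flipb_ne hbb]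
        have hbst' : bstar m π z' w' = π (A+1) := by
          simp only [bstar]
          rw [findGreatest_congr hPP, ← hAdef]
        have hflipz : flipb z' (π (A+1)) = z := by rw [hz'def, flipb_flipb]
        have hflipw : flipb w' (π (A+1)) = w := by rw [hw'def, flipb_flipb]
        have hz'w'ne : z' ≠ w' := by
          intro hcc
          apply hzw
          rw [← hflipz, ← hflipw, hcc]
        have hinv : invP m τ π (k,d)
            = ((if k ≤ 2^(m-2) then 0 else 2^(m-2)) + z' + 1, d) := by
          simp only [invP]
          rw [if_neg hbd, if_neg hzw, if_pos hj0, hbst, ← hz'def]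
        -- per-branch interface facts
        have hface : zof (2^(m-2)) ((if k ≤ 2^(m-2) then 0 else 2^(m-2)) + z' + 1) = z'
            ∧ zof (2^(m-2)) ((if k ≤ 2^(m-2) then 0 else 2^(m-2)) + z' + 1 + τ) = w'
            ∧ (if (if k ≤ 2^(m-2) then 0 else 2^(m-2)) + z' + 1 ≤ 2^(m-2) then 0 else 2^(m-2)) + z + 1 = k
            ∧ (if k ≤ 2^(m-2) then 0 else 2^(m-2)) + z' + 1 + τ ≤ 2*2^(m-2)
            ∧ ((if 2^(m-2) < (if k ≤ 2^(m-2) then 0 else 2^(m-2)) + z' + 1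
                  then bitZ z' (π 0) + ((m-3:ℕ) : ZMod 2) else 0)
                = (if 2^(m-2) < k then bitZ z (π 0) + ((m-3:ℕ) : ZMod 2) else 0))
            ∧ ((if 2^(m-2) < (if k ≤ 2^(m-2) then 0 else 2^(m-2)) + z' + 1 + τ
                  then bitZ w' (π 0) + ((m-3:ℕ) : ZMod 2) else 0)
                = (if 2^(m-2) < k+τ then bitZ w (π 0) + ((m-3:ℕ) : ZMod 2) else 0)) := by
          by_cases hkn : k ≤ 2^(m-2)
          · have hz_eq : z = k - 1 := by rw [hzdef]; unfold zof; rw [if_pos hkn]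
            by_cases hkτ : k + τ ≤ 2^(m-2)
            · -- BB
              have hw_eq : w = k + τ - 1 := by rw [hwdef]; unfold zof; rw [if_pos hkτ]
              have hwz : w = z + τ := by omega
              have hw'z' : w' = z' + τ := by
                rw [hw'def, hz'def, hwz, flipb_add (by rw [← hwz]; exact hbsame)]
              rw [if_pos hkn]
              have hz'1 : 0 + z' + 1 ≤ 2^(m-2) := by omega
              refine ⟨?_, ?_, ?_, by omega, ?_, ?_⟩
              · unfold zof; rw [if_pos (by omega)]; omega
              · unfold zof; rw [if_pos (by omega)]; omega
              · rw [if_pos hz'1]; omega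
              · rw [hp0, if_neg (by omega), if_neg (by omega)]
              · rw [hq0, if_neg (by omega), if_neg (by omega)]
            · -- BC
              have hw_eq : w = k + τ - 1 - 2^(m-2) := by
                rw [hwdef]; unfold zof; rw [if_neg hkτ]
              have hzw' : z = w + (2^(m-2) - τ) := by omega
              have hz'w' : z' = w' + (2^(m-2) - τ) := by
                rw [hz'def, hw'def, hzw', flipb_add (by rw [← hzw']; exact hbsame.symm)]
              rw [if_pos hkn]
              have hz'1 : 0 + z' + 1 ≤ 2^(m-2) := by omega
              refine ⟨?_, ?_, ?_, by omega, ?_, ?_⟩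
              · unfold zof; rw [if_pos (by omega)]; omega
              · unfold zof; rw [if_neg (by omega)]; omega
              · rw [if_pos hz'1]; omega
              · rw [hp0, if_neg (by omega), if_neg (by omega)]
              · rw [hq0, if_pos (by omega), if_pos (by omega)]
          · -- CC
            have hz_eq : z = k - 1 - 2^(m-2) := by rw [hzdef]; unfold zof; rw [if_neg hkn]
            have hw_eq : w = k + τ - 1 - 2^(m-2) := by
              rw [hwdef]; unfold zof; rw [if_neg (by omega)]
            have hwz : w = z + τ := by omega
            have hw'z' : w' = z' + τ := by
              rw [hw'def, hz'def, hwz, flipb_add (by rw [← hwz]; exact hbsame)]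
            rw [if_neg hkn]
            have hz'1 : ¬ (2^(m-2) + z' + 1 ≤ 2^(m-2)) := by omega
            refine ⟨?_, ?_, ?_, by omega, ?_, ?_⟩
            · unfold zof; rw [if_neg (by omega)]; omega
            · unfold zof; rw [if_neg (by omega)]; omega
            · rw [if_neg hz'1]; omega
            · rw [hp0, if_pos (by omega), if_pos (by omega)]
            · rw [hq0, if_pos (by omega), if_pos (by omega)]
        obtain ⟨Fz, Fw, Fk, Fb1, FX, FY⟩ := hface
        rw [hinv]
        refine ⟨by omega, ?_, ?_⟩
        · -- involutivity
          simp only [invP]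
          rw [if_neg (by push_neg; omega), Fz, Fw, if_neg hz'w'ne, if_pos hnb', hbst',
             hflipz, Fk]
        · -- cancellation
          rw [Eval_slot (t := k) hm hπm e f hk1 (by omega) d,
             Eval_slot (t := k+τ) hm hπm e f (by omega) (by omega) d,
             Eval_slot (t := (if k ≤ 2^(m-2) then 0 else 2^(m-2)) + z' + 1) hm hπm e f
               (by omega) (by omega) d,
             Eval_slot (t := (if k ≤ 2^(m-2) then 0 else 2^(m-2)) + z' + 1 + τ) hm hπm e f
               (by omega) (by omega) d]
          rw [← hzdef, ← hwdef, Fz, Fw, FX, FY]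
          apply chiZ_cancel
          have htwo : (2 : ZMod 2) = 0 := rfl
          linear_combination -hQQ - d * hBB - hLL - htwo

      · -- d-swap case
        have hinv : invP m τ π (k,d) = (k, d+1) := by
          simp only [invP]; rw [if_neg hbd, if_neg hzw, if_neg hj0]
        rw [hinv]
        refine ⟨hk, ?_, ?_⟩
        · simp only [invP]; rw [if_neg hbd, if_neg hzw, if_neg hj0, dplus2]
        · rw [Eval_slot (t := k) hm hπm e f hk1 (by omega) d,
             Eval_slot (t := k+τ) hm hπm e f (by omega) (by omega) d,
             Eval_slot (t := k) hm hπm e f hk1 (by omega) (d+1),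
             Eval_slot (t := k+τ) hm hπm e f (by omega) (by omega) (d+1)]
          apply chiZ_cancel
          have hB := bitZ_ne_sum hj0
          rw [char2_solve hB]
          generalize Qf m π (zof (2^(m-2)) k) = Qz
          generalize Qf m π (zof (2^(m-2)) (k+τ)) = Qw
          generalize LinF m e f (zof (2^(m-2)) k) = Lz
          generalize LinF m e f (zof (2^(m-2)) (k+τ)) = Lw
          generalize bitZ (zof (2^(m-2)) (k+τ)) (π (m-3)) = Bw
          generalize (if 2^(m-2) < k then bitZ (zof (2^(m-2)) k) (π 0) + ((m-3:ℕ) : ZMod 2) else 0) = X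
          generalize (if 2^(m-2) < k+τ then bitZ (zof (2^(m-2)) (k+τ)) (π 0) + ((m-3:ℕ) : ZMod 2) else 0) = Y
          clear hinv
          revert Qz Qw Lz Lw Bw X Y d
          decide

/-- For the constructed truncated pair of length `N = 2^{m-1}+2`,
the aperiodic autocorrelation sum vanishes for all `1 ≤ τ ≤ 2^{m-2}`. -/
theorem ebzcp_zcz_first_zone (m : ℕ) (hm : 4 ≤ m) (π : ℕ → ℕ)
    (hπ : Set.BijOn π (Set.Iio (m - 2)) (Set.Iio (m - 2)))
    (e f : ℕ → ZMod 2)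
    (N : ℕ) (hN : N = 2 ^ (m - 1) + 2)
    (a b : ℕ → ℤ)
    (ha : a = PsiT (gbf m π e f 0) (2 ^ (m - 2) - 1))
    (hb : b = PsiT (gbf m π e f 1) (2 ^ (m - 2) - 1)) :
    ∀ τ : ℕ, 1 ≤ τ → τ ≤ 2 ^ (m - 2) →
      rho N a τ + rho N b τ = 0 := by
  intro τ hτ1 hτ2
  subst hN ha hb
  have hpow : (2:ℕ)^(m-1) = 2*2^(m-2) := by rw [← pow_succ']; congr 1; omega
  have hset : 2^(m-1) + 2 - τ = 2*2^(m-2)+2-τ := by omega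
  rw [rho, rho, ← Finset.sum_add_distrib, hset]
  have hstep : ∀ k ∈ Finset.range (2*2^(m-2)+2-τ),
      (PsiT (gbf m π e f 0) (2^(m-2)-1) k * PsiT (gbf m π e f 0) (2^(m-2)-1) (k+τ)
        + PsiT (gbf m π e f 1) (2^(m-2)-1) k * PsiT (gbf m π e f 1) (2^(m-2)-1) (k+τ))
      = ∑ p ∈ ({0,1} : Finset (ZMod 2)),
          PsiT (gbf m π e f p) (2^(m-2)-1) k * PsiT (gbf m π e f p) (2^(m-2)-1) (k+τ) := by
    intro k _
    rw [Finset.sum_pair (by decide : (0 : ZMod 2) ≠ 1)]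
  rw [Finset.sum_congr rfl hstep, ← Finset.sum_product']
  have hterm : ∀ (F : (ℕ → ZMod 2) → ZMod 2) (k : ℕ),
      PsiT F (2^(m-2)-1) k * PsiT F (2^(m-2)-1) (k+τ)
        = chiZ (F (bitZ (2^(m-2)-1+k)) + F (bitZ (2^(m-2)-1+(k+τ)))) := by
    intro F k
    rw [chiZ_add]
    rfl
  have hmem01 : ∀ x : ZMod 2, x ∈ ({0,1} : Finset (ZMod 2)) := by decide
  apply Finset.sum_involution (fun p _ => invP m τ π p)
  · -- cancellation
    intro p hp
    obtain ⟨k, d⟩ := p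
    rw [Finset.mem_product, Finset.mem_range] at hp
    have hc := (main_claim hm hπ e f hτ1 hτ2 k d hp.1).2.2
    rw [hterm, hterm]
    exact hc
  · -- no fixed point
    intro p hp hne heq
    obtain ⟨k, d⟩ := p
    rw [Finset.mem_product, Finset.mem_range] at hp
    have hc := (main_claim hm hπ e f hτ1 hτ2 k d hp.1).2.2
    rw [heq] at hc
    have hc2 : chiZ (gbf m π e f d (bitZ (2^(m-2)-1+k)) + gbf m π e f d (bitZ (2^(m-2)-1+(k+τ))))
        + chiZ (gbf m π e f d (bitZ (2^(m-2)-1+k)) + gbf m π e f d (bitZ (2^(m-2)-1+(k+τ)))) = 0 := hc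
    apply hne
    rw [hterm]
    linarith
  · -- membership
    intro p hp
    obtain ⟨k, d⟩ := p
    rw [Finset.mem_product, Finset.mem_range] at hp
    have hc := (main_claim hm hπ e f hτ1 hτ2 k d hp.1).1
    rw [Finset.mem_product, Finset.mem_range]
    exact ⟨hc, hmem01 _⟩
  · -- involutive
    intro p hp
    obtain ⟨k, d⟩ := p
    rw [Finset.mem_product, Finset.mem_range] at hp
    exact (main_claim hm hπ e f hτ1 hτ2 k d hp.1).2.1
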